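/- Let A, A' be essentially cyclic nonnegative integer n×n matrices (each in the block form with nilpotent outer diagonal blocks and a single cyclic-permutation middle block), and suppose U(I−A)V = I−A' with U, V invertible integer matrices of determinant 1. If U is a nonnegative matrix, then the induced cokernel isomorphism [v] ↦ [Uv] from Z^n/(I−A)Z^n to Z^n/(I−A')Z^n sends the distinguished generator [e] (the class of a middle-block standard basis vector of A) to a nonnegative multiple of the distinguished generator [e'] of Z^n/(I−A')Z^n. -/

import Mathlib

open Matrix

private lemma geom_inv {A : Type*} [Ring A] {x : A} {m : ℕ} (h : x ^ m = 0) :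
    (1 - x) * (∑ i ∈ Finset.range m, x ^ i) = 1 := by
  have hc : Commute (1 - x) (∑ i ∈ Finset.range m, x ^ i) :=
    ((Commute.one_left _).sub_left
      (Commute.sum_right _ _ _ fun i _ => (Commute.refl x).pow_right i))
  rw [hc.eq]
  have h1 := geom_sum_mul x m
  rw [h] at h1
  have h2 : (∑ i ∈ Finset.range m, x ^ i) * (1 - x) =
      -((∑ i ∈ Finset.range m, x ^ i) * (x - 1)) := by
    rw [mul_sub, mul_sub, mul_one, neg_sub]
  rw [h2, h1]; norm_num

private lemma pow_entries_nonneg {n : ℕ} {N : Matrix (Fin n) (Fin n) ℤ}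
    (h : ∀ i j, 0 ≤ N i j) (k : ℕ) : ∀ i j, 0 ≤ (N ^ k) i j := by
  induction k with
  | zero => intro i j; rw [pow_zero, Matrix.one_apply]; split <;> norm_num
  | succ k ih =>
    intro i j
    rw [pow_succ, Matrix.mul_apply]
    exact Finset.sum_nonneg fun l _ => mul_nonneg (ih i l) (h l j)

private def eA {a b c : ℕ} (x : Fin a → ℤ) : Fin a ⊕ (Fin b ⊕ Fin c) → ℤ := Sum.elim x 0
private def eB {a b c : ℕ} (y : Fin b → ℤ) : Fin a ⊕ (Fin b ⊕ Fin c) → ℤ :=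
  Sum.elim 0 (Sum.elim y 0)
private def eC {a b c : ℕ} (z : Fin c → ℤ) : Fin a ⊕ (Fin b ⊕ Fin c) → ℤ :=
  Sum.elim 0 (Sum.elim 0 z)


/-- a determinant-1 equivalence `U(I−A)V = I−A'` between essentially
cyclic nonnegative integer matrices with `U` nonnegative induces a positive
cokernel isomorphism: the class of `U·e` is a nonnegative multiple of the
distinguished generator `[e']`. -/
theorem esscyclic_nonneg_equivalence_positive (a b c : ℕ)
    (N₁ : Matrix (Fin a) (Fin a) ℤ) (X : Matrix (Fin a) (Fin b) ℤ)
    (Y : Matrix (Fin a) (Fin c) ℤ) (P : Matrix (Fin b) (Fin b) ℤ)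
    (Z : Matrix (Fin b) (Fin c) ℤ) (N₂ : Matrix (Fin c) (Fin c) ℤ)
    (N₁' : Matrix (Fin a) (Fin a) ℤ) (X' : Matrix (Fin a) (Fin b) ℤ)
    (Y' : Matrix (Fin a) (Fin c) ℤ) (P' : Matrix (Fin b) (Fin b) ℤ)
    (Z' : Matrix (Fin b) (Fin c) ℤ) (N₂' : Matrix (Fin c) (Fin c) ℤ)
    (A A' : Matrix (Fin a ⊕ (Fin b ⊕ Fin c)) (Fin a ⊕ (Fin b ⊕ Fin c)) ℤ)
    (hA : A = Matrix.fromBlocks N₁ (Matrix.fromCols X Y) 0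
      (Matrix.fromBlocks P Z 0 N₂))
    (hA' : A' = Matrix.fromBlocks N₁' (Matrix.fromCols X' Y') 0
      (Matrix.fromBlocks P' Z' 0 N₂'))
    (hnn : ∀ i j, 0 ≤ A i j) (hnn' : ∀ i j, 0 ≤ A' i j)
    (hN₁ : IsNilpotent N₁) (hN₂ : IsNilpotent N₂)
    (hN₁' : IsNilpotent N₁') (hN₂' : IsNilpotent N₂')
    (σ σ' : Equiv.Perm (Fin b))
    (hP : P = Matrix.of fun i j => if σ i = j then (1 : ℤ) else 0)
    (hP' : P' = Matrix.of fun i j => if σ' i = j then (1 : ℤ) else 0)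
    (hσ : ∀ i j : Fin b, ∃ k : ℕ, (σ ^ k) i = j)
    (hσ' : ∀ i j : Fin b, ∃ k : ℕ, (σ' ^ k) i = j)
    (U V : Matrix (Fin a ⊕ (Fin b ⊕ Fin c)) (Fin a ⊕ (Fin b ⊕ Fin c)) ℤ)
    (hU : U.det = 1) (hV : V.det = 1)
    (hUV : U * (1 - A) * V = 1 - A')
    (hUnn : ∀ i j, 0 ≤ U i j)
    (i₀ i₀' : Fin b) :
    ∃ d : ℕ,
      (Submodule.Quotient.mk (U.mulVec (Pi.single (Sum.inr (Sum.inl i₀)) 1)) :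
          (Fin a ⊕ (Fin b ⊕ Fin c) → ℤ) ⧸ LinearMap.range ((1 - A').mulVecLin)) =
        (d : ℤ) • Submodule.Quotient.mk (Pi.single (Sum.inr (Sum.inl i₀')) 1) := by
  classical
  set R := LinearMap.range ((1 - A').mulVecLin) with hRdef
  obtain ⟨m₁, hm₁⟩ := hN₁'
  obtain ⟨m₂, hm₂⟩ := hN₂'
  set M₁ := ∑ i ∈ Finset.range m₁, N₁' ^ i with hM₁def
  set M₂ := ∑ i ∈ Finset.range m₂, N₂' ^ i with hM₂def
  have hinv₁ : (1 - N₁') * M₁ = 1 := geom_inv hm₁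
  have hinv₂ : (1 - N₂') * M₂ = 1 := geom_inv hm₂
  have hM₁x : ∀ x : Fin a → ℤ, M₁ *ᵥ x - N₁' *ᵥ (M₁ *ᵥ x) = x := by
    intro x
    have h : M₁ - N₁' * M₁ = 1 := by
      have h' := hinv₁; rw [sub_mul, one_mul] at h'; exact h'
    rw [mulVec_mulVec, ← sub_mulVec, h, one_mulVec]
  have hM₂x : ∀ z : Fin c → ℤ, M₂ *ᵥ z - N₂' *ᵥ (M₂ *ᵥ z) = z := by
    intro z
    have h : M₂ - N₂' * M₂ = 1 := by
      have h' := hinv₂; rw [sub_mul, one_mul] at h'; exact h'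
    rw [mulVec_mulVec, ← sub_mulVec, h, one_mulVec]
  -- block computation of (1 - A') *ᵥ
  have hmv : ∀ (x : Fin a → ℤ) (y : Fin b → ℤ) (z : Fin c → ℤ),
      (1 - A') *ᵥ (Sum.elim x (Sum.elim y z)) =
      Sum.elim (x - (N₁' *ᵥ x + (X' *ᵥ y + Y' *ᵥ z)))
        (Sum.elim (y - (P' *ᵥ y + Z' *ᵥ z)) (z - N₂' *ᵥ z)) := by
    intro x y z
    rw [sub_mulVec, one_mulVec, hA']
    simp only [fromBlocks_mulVec, Sum.elim_comp_inl, Sum.elim_comp_inr,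
      fromCols_mulVec_sumElim, zero_mulVec, zero_add]
    funext i
    rcases i with i | (i | i) <;> simp
  -- top block vectors are in the image
  have key1 : ∀ x : Fin a → ℤ, (eA x : Fin a ⊕ (Fin b ⊕ Fin c) → ℤ) ∈ R := by
    intro x
    refine ⟨Sum.elim (M₁ *ᵥ x) (Sum.elim 0 0), ?_⟩
    rw [mulVecLin_apply, hmv]
    simp only [mulVec_zero, add_zero, sub_zero, hM₁x x]
    funext i
    rcases i with i | (i | i) <;> simp [eA]
  have hPv : ∀ j : Fin b, P' *ᵥ Pi.single (σ' j) 1 = Pi.single j 1 := by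
    intro j
    rw [mulVec_single]
    funext i
    simp [hP', Pi.single_apply, Equiv.apply_eq_iff_eq, eq_comm]
  -- single middle step
  have key2 : ∀ j : Fin b,
      ((eB (Pi.single (σ' j) 1) - eB (Pi.single j 1)) : Fin a ⊕ (Fin b ⊕ Fin c) → ℤ) ∈ R := by
    intro j
    have h1 : (1 - A').mulVecLin
        (Sum.elim 0 (Sum.elim (Pi.single (σ' j) 1) 0)) ∈ R := ⟨_, rfl⟩
    have h2 := key1 (X' *ᵥ Pi.single (σ' j) 1)
    have heq : (eB (Pi.single (σ' j) 1) - eB (Pi.single j 1) : Fin a ⊕ (Fin b ⊕ Fin c) → ℤ) =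
        (1 - A').mulVecLin (Sum.elim 0 (Sum.elim (Pi.single (σ' j) 1) 0)) +
          eA (X' *ᵥ Pi.single (σ' j) 1) := by
      rw [mulVecLin_apply, hmv, hPv j]
      funext i
      rcases i with i | (i | i) <;> simp [eA, eB, mulVec_zero, Pi.single_apply]
    rw [heq]
    exact R.add_mem h1 h2
  -- iterate
  have key2' : ∀ (k : ℕ) (j : Fin b),
      ((eB (Pi.single ((σ' ^ k) j) 1) - eB (Pi.single j 1)) :
        Fin a ⊕ (Fin b ⊕ Fin c) → ℤ) ∈ R := by
    intro k
    induction k with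
    | zero => intro j; simp
    | succ k ih =>
      intro j
      have hs : ((σ' ^ (k + 1)) j) = σ' ((σ' ^ k) j) := by
        rw [pow_succ', Equiv.Perm.mul_apply]
      rw [hs]
      have h3 := R.add_mem (key2 ((σ' ^ k) j)) (ih j)
      rwa [sub_add_sub_cancel] at h3
  have key2'' : ∀ j : Fin b,
      ((eB (Pi.single j 1) - eB (Pi.single i₀' 1)) : Fin a ⊕ (Fin b ⊕ Fin c) → ℤ) ∈ R := by
    intro j
    obtain ⟨k, hk⟩ := hσ' i₀' j
    rw [← hk]
    exact key2' k i₀'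
  -- middle block: class is (sum of entries) • [e']
  have keyB : ∀ y : Fin b → ℤ,
      ((eB y - (∑ j, y j) • eB (Pi.single i₀' 1)) : Fin a ⊕ (Fin b ⊕ Fin c) → ℤ) ∈ R := by
    intro y
    have h1 : (eB y : Fin a ⊕ (Fin b ⊕ Fin c) → ℤ) = ∑ j, y j • eB (Pi.single j 1) := by
      funext i
      rcases i with i | (i | i) <;>
        simp [eB, Finset.sum_apply, Pi.single_apply, mul_ite]
    have hd : (eB y - (∑ j, y j) • eB (Pi.single i₀' 1) : Fin a ⊕ (Fin b ⊕ Fin c) → ℤ) =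
        ∑ j, y j • (eB (Pi.single j 1) - eB (Pi.single i₀' 1)) := by
      rw [h1, Finset.sum_smul, ← Finset.sum_sub_distrib]
      simp [smul_sub]
    rw [hd]
    exact Submodule.sum_mem _ fun j _ => R.smul_mem _ (key2'' j)
  -- bottom block
  have keyC : ∀ z : Fin c → ℤ,
      ((eC z - (∑ j, (Z' *ᵥ (M₂ *ᵥ z)) j) • eB (Pi.single i₀' 1)) :
        Fin a ⊕ (Fin b ⊕ Fin c) → ℤ) ∈ R := by
    intro z
    have h1 : (1 - A').mulVecLin (Sum.elim 0 (Sum.elim 0 (M₂ *ᵥ z))) ∈ R := ⟨_, rfl⟩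
    have h2 := key1 (Y' *ᵥ (M₂ *ᵥ z))
    have h3 := keyB (Z' *ᵥ (M₂ *ᵥ z))
    have heq : (eC z : Fin a ⊕ (Fin b ⊕ Fin c) → ℤ) =
        (1 - A').mulVecLin (Sum.elim 0 (Sum.elim 0 (M₂ *ᵥ z))) +
          eA (Y' *ᵥ (M₂ *ᵥ z)) + eB (Z' *ᵥ (M₂ *ᵥ z)) := by
      rw [mulVecLin_apply, hmv]
      simp only [mulVec_zero, add_zero, zero_add, zero_sub, hM₂x z]
      funext i
      rcases i with i | (i | i) <;> simp [eA, eB, eC]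
    rw [heq, add_sub_assoc]
    exact R.add_mem (R.add_mem h1 h2) h3
  -- combine
  have main : ∀ (x : Fin a → ℤ) (y : Fin b → ℤ) (z : Fin c → ℤ),
      ((eA x + eB y + eC z -
          ((∑ j, y j) + ∑ j, (Z' *ᵥ (M₂ *ᵥ z)) j) • eB (Pi.single i₀' 1)) :
        Fin a ⊕ (Fin b ⊕ Fin c) → ℤ) ∈ R := by
    intro x y z
    have hgoal : (eA x + eB y + eC z -
        ((∑ j, y j) + ∑ j, (Z' *ᵥ (M₂ *ᵥ z)) j) • eB (Pi.single i₀' 1) :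
          Fin a ⊕ (Fin b ⊕ Fin c) → ℤ) =
        eA x + (eB y - (∑ j, y j) • eB (Pi.single i₀' 1)) +
          (eC z - (∑ j, (Z' *ᵥ (M₂ *ᵥ z)) j) • eB (Pi.single i₀' 1)) := by
      rw [add_smul]; abel
    rw [hgoal]
    exact R.add_mem (R.add_mem (key1 x) (keyB y)) (keyC z)
  -- nonnegativity data
  have hZ'nn : ∀ i j, 0 ≤ Z' i j := by
    intro i j
    have := hnn' (Sum.inr (Sum.inl i)) (Sum.inr (Sum.inr j))
    rw [hA'] at this
    simpa using this
  have hN₂'nn : ∀ i j, 0 ≤ N₂' i j := by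
    intro i j
    have := hnn' (Sum.inr (Sum.inr i)) (Sum.inr (Sum.inr j))
    rw [hA'] at this
    simpa using this
  have hM₂nn : ∀ i j, 0 ≤ M₂ i j := by
    intro i j
    rw [hM₂def, Matrix.sum_apply]
    exact Finset.sum_nonneg fun k _ => pow_entries_nonneg hN₂'nn k i j
  -- the vector
  set v : Fin a ⊕ (Fin b ⊕ Fin c) → ℤ :=
    U *ᵥ Pi.single (Sum.inr (Sum.inl i₀)) 1 with hvdef
  have hvnn : ∀ i, 0 ≤ v i := by
    intro i
    rw [hvdef, mulVec_single]
    simpa using hUnn i (Sum.inr (Sum.inl i₀))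
  set x : Fin a → ℤ := fun i => v (Sum.inl i) with hxdef
  set y : Fin b → ℤ := fun j => v (Sum.inr (Sum.inl j)) with hydef
  set z : Fin c → ℤ := fun k => v (Sum.inr (Sum.inr k)) with hzdef
  have hvdec : v = eA x + eB y + eC z := by
    funext i
    rcases i with i | (i | i) <;> simp [eA, eB, eC, hxdef, hydef, hzdef]
  set coef : ℤ := (∑ j, y j) + ∑ j, (Z' *ᵥ (M₂ *ᵥ z)) j with hcoefdef
  have hcoefnn : 0 ≤ coef := by
    rw [hcoefdef]
    have hz : ∀ k, 0 ≤ z k := fun k => hvnn (Sum.inr (Sum.inr k))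
    have h1 : 0 ≤ ∑ j, y j :=
      Finset.sum_nonneg fun j _ => hvnn (Sum.inr (Sum.inl j))
    have h2 : 0 ≤ ∑ j, (Z' *ᵥ (M₂ *ᵥ z)) j := by
      refine Finset.sum_nonneg fun j _ => ?_
      rw [mulVec_mulVec]
      have he : ((Z' * M₂) *ᵥ z) j = ∑ k, (Z' * M₂) j k * z k := by
        simp [Matrix.mulVec, dotProduct]
      rw [he]
      refine Finset.sum_nonneg fun k _ => mul_nonneg ?_ (hz k)
      rw [Matrix.mul_apply]
      exact Finset.sum_nonneg fun l _ => mul_nonneg (hZ'nn j l) (hM₂nn l k)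
    exact add_nonneg h1 h2
  refine ⟨coef.toNat, ?_⟩
  have hE : (Pi.single (Sum.inr (Sum.inl i₀')) 1 : Fin a ⊕ (Fin b ⊕ Fin c) → ℤ) =
      eB (Pi.single i₀' 1) := by
    funext i
    rcases i with i | (i | i) <;> simp [eB, Pi.single_apply]
  rw [Int.toNat_of_nonneg hcoefnn, ← Submodule.Quotient.mk_smul, Submodule.Quotient.eq]
  rw [hE, hvdec]
  exact main x y z
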